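/- Let η > 0, k ≥ 0 and m ≥ 0. Let Λ : [0,∞) → [0,∞) be a function that is absolutely continuous on every compact subinterval of [0,∞), and let h : [0,∞) → ℝ be locally integrable with ∫_s^t h(τ) dτ ≤ η(t−s) + m for all 0 ≤ s ≤ t. If Λ'(t) + 2ηΛ(t) ≤ h(t)Λ(t) + k for almost every t ≥ 0, then for all t ≥ 0 one has Λ(t) ≤ Λ(0) e^m e^{−ηt} + k e^m / η. -/

import Mathlib

open MeasureTheory

lemma abs_le_of_mem_uIoc {x u : ℝ} (hu : u ∈ Set.uIoc 0 x) : |u| ≤ |x| := by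
  rcases le_total 0 x with hx | hx
  · rw [Set.uIoc_of_le hx] at hu
    rw [abs_of_nonneg (le_of_lt hu.1), abs_of_nonneg hx]; exact hu.2
  · rw [Set.uIoc_of_ge hx] at hu
    rw [abs_of_nonpos (hu.2), abs_of_nonpos hx]
    linarith [hu.1]

lemma aux_exp1 (x : ℝ) : |Real.exp x - 1| ≤ |x| * Real.exp |x| := by
  have hftc : ∫ u in (0:ℝ)..x, Real.exp u = Real.exp x - 1 := by
    have := intervalIntegral.integral_eq_sub_of_hasDerivAt
      (f := Real.exp) (f' := Real.exp) (a := 0) (b := x)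
      (fun u _ => Real.hasDerivAt_exp u)
      (Real.continuous_exp.intervalIntegrable 0 x)
    simpa using this
  have hb : ∀ u ∈ Set.uIoc 0 x, ‖Real.exp u‖ ≤ Real.exp |x| := by
    intro u hu
    rw [Real.norm_eq_abs, abs_of_pos (Real.exp_pos u)]
    exact Real.exp_le_exp.mpr ((le_abs_self u).trans (abs_le_of_mem_uIoc hu))
  have := intervalIntegral.norm_integral_le_of_norm_le_const hb
  rw [hftc] at this
  simpa [Real.norm_eq_abs, mul_comm] using this

lemma aux_exp2 (x : ℝ) : |Real.exp x - 1 - x| ≤ x ^ 2 * Real.exp |x| := by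
  have hftc : ∫ u in (0:ℝ)..x, (Real.exp u - 1) = Real.exp x - 1 - x := by
    have := intervalIntegral.integral_eq_sub_of_hasDerivAt
      (f := fun u => Real.exp u - u) (f' := fun u => Real.exp u - 1) (a := 0) (b := x)
      (fun u _ => (Real.hasDerivAt_exp u).sub (hasDerivAt_id u))
      ((Real.continuous_exp.sub continuous_const).intervalIntegrable 0 x)
    rw [this]; simp [Real.exp_zero]; ring
  have hb : ∀ u ∈ Set.uIoc 0 x, ‖Real.exp u - 1‖ ≤ |x| * Real.exp |x| := by
    intro u hu
    have h1 := aux_exp1 u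
    have h2 : |u| ≤ |x| := abs_le_of_mem_uIoc hu
    have h3 : Real.exp |u| ≤ Real.exp |x| := Real.exp_le_exp.mpr h2
    calc ‖Real.exp u - 1‖ ≤ |u| * Real.exp |u| := h1
      _ ≤ |x| * Real.exp |x| :=
        mul_le_mul h2 h3 (Real.exp_pos _).le (abs_nonneg x)
  have := intervalIntegral.norm_integral_le_of_norm_le_const hb
  rw [hftc] at this
  rw [Real.norm_eq_abs] at this
  calc |Real.exp x - 1 - x| ≤ |x| * Real.exp |x| * |x - 0| := this
    _ = x ^ 2 * Real.exp |x| := by rw [sub_zero]; rw [← sq_abs]; ring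

set_option maxHeartbeats 2000000 in
/-- Grönwall-type inequality (Proposition 5.1 / Appendix of the paper).
Absolute continuity of `Λ` on compact subintervals of `[0,∞)` is encoded through the
existence of an a.e. derivative `Λ'` which is locally integrable and for which the
fundamental theorem of calculus representation holds. -/
theorem gronwall_type_inequality
    (η k m : ℝ) (hη : 0 < η) (hk : 0 ≤ k) (hm : 0 ≤ m)
    (Λ Λ' h : ℝ → ℝ)
    (hΛnonneg : ∀ t, 0 ≤ t → 0 ≤ Λ t)
    (hΛ'int : ∀ t, 0 ≤ t → IntervalIntegrable Λ' volume 0 t)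
    (hΛderiv : ∀ᵐ t ∂(volume.restrict (Set.Ici (0:ℝ))), HasDerivAt Λ (Λ' t) t)
    (hΛFTC : ∀ t, 0 ≤ t → Λ t = Λ 0 + ∫ s in (0:ℝ)..t, Λ' s)
    (hhint : ∀ s t, 0 ≤ s → s ≤ t → IntervalIntegrable h volume s t)
    (hhbound : ∀ s t, 0 ≤ s → s ≤ t → (∫ τ in s..t, h τ) ≤ η * (t - s) + m)
    (hineq : ∀ᵐ t ∂(volume.restrict (Set.Ici (0:ℝ))),
      Λ' t + 2 * η * Λ t ≤ h t * Λ t + k) :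
    ∀ t, 0 ≤ t →
      Λ t ≤ Λ 0 * Real.exp m * Real.exp (-η * t) + k * Real.exp m / η := by
  intro T hT
  -- basic data
  set g : ℝ → ℝ := fun u => |h u| + |Λ' u| with hg_def
  set B : ℝ → ℝ := fun x => 2 * η * x - ∫ u in (0:ℝ)..x, h u with hB_def
  set V : ℝ → ℝ := fun x => 2 * η * x + ∫ u in (0:ℝ)..x, g u with hV_def
  set E : ℝ → ℝ := fun x => Real.exp (B x) with hE_def
  -- integrability facts
  have ihh : ∀ s u : ℝ, 0 ≤ s → s ≤ u → IntervalIntegrable h volume s u :=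
    fun s u hs hsu => hhint s u hs hsu
  have iΛ' : ∀ s u : ℝ, 0 ≤ s → s ≤ u → IntervalIntegrable Λ' volume s u := by
    intro s u hs hsu
    have h0u : (0:ℝ) ≤ u := hs.trans hsu
    refine (hΛ'int u h0u).mono_set ?_
    exact Set.uIcc_subset_uIcc
      (by rw [Set.uIcc_of_le h0u]; exact Set.mem_Icc.mpr ⟨hs, hsu⟩)
      (by rw [Set.uIcc_of_le h0u]; exact Set.mem_Icc.mpr ⟨h0u, le_rfl⟩)
  have ig : ∀ s u : ℝ, 0 ≤ s → s ≤ u → IntervalIntegrable g volume s u :=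
    fun s u hs hsu => ((ihh s u hs hsu).abs).add ((iΛ' s u hs hsu).abs)
  -- increments
  have hBsub : ∀ s u : ℝ, 0 ≤ s → s ≤ u →
      B u - B s = 2 * η * (u - s) - ∫ x in s..u, h x := by
    intro s u hs hsu
    have hadd := intervalIntegral.integral_add_adjacent_intervals
      (ihh 0 s le_rfl hs) (ihh s u hs hsu)
    simp only [hB_def]
    rw [← hadd]; ring
  have hVsub : ∀ s u : ℝ, 0 ≤ s → s ≤ u →
      V u - V s = 2 * η * (u - s) + ∫ x in s..u, g x := by
    intro s u hs hsu
    have hadd := intervalIntegral.integral_add_adjacent_intervals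
      (ig 0 s le_rfl hs) (ig s u hs hsu)
    simp only [hV_def]
    rw [← hadd]; ring
  have hΛsub : ∀ s u : ℝ, 0 ≤ s → s ≤ u → Λ u - Λ s = ∫ x in s..u, Λ' x := by
    intro s u hs hsu
    have hadd := intervalIntegral.integral_add_adjacent_intervals
      (iΛ' 0 s le_rfl hs) (iΛ' s u hs hsu)
    rw [hΛFTC u (hs.trans hsu), hΛFTC s hs, ← hadd]; ring
  have hV0 : V 0 = 0 := by simp [hV_def]
  have hB0 : B 0 = 0 := by simp [hB_def]
  -- basic estimates on increments
  have hgabs : ∀ s u : ℝ, 0 ≤ s → s ≤ u → (∫ x in s..u, |h x|) ≤ ∫ x in s..u, g x := by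
    intro s u hs hsu
    refine intervalIntegral.integral_mono_on hsu ((ihh s u hs hsu).abs) (ig s u hs hsu) ?_
    intro x _
    simp only [hg_def]
    exact le_add_of_nonneg_right (abs_nonneg _)
  have hgabsΛ : ∀ s u : ℝ, 0 ≤ s → s ≤ u → (∫ x in s..u, |Λ' x|) ≤ ∫ x in s..u, g x := by
    intro s u hs hsu
    refine intervalIntegral.integral_mono_on hsu ((iΛ' s u hs hsu).abs) (ig s u hs hsu) ?_
    intro x _
    simp only [hg_def]
    exact le_add_of_nonneg_left (abs_nonneg _)
  have hVmono : ∀ s u : ℝ, 0 ≤ s → s ≤ u → V s ≤ V u := by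
    intro s u hs hsu
    have h1 := hVsub s u hs hsu
    have h2 : (0:ℝ) ≤ ∫ x in s..u, g x := by
      refine intervalIntegral.integral_nonneg hsu ?_
      intro x _; simp only [hg_def]; positivity
    nlinarith
  have hBdiff : ∀ s u : ℝ, 0 ≤ s → s ≤ u → |B u - B s| ≤ V u - V s := by
    intro s u hs hsu
    rw [hBsub s u hs hsu, hVsub s u hs hsu]
    have h1 : |∫ x in s..u, h x| ≤ ∫ x in s..u, |h x| :=
      intervalIntegral.abs_integral_le_integral_abs hsu
    have h2 := hgabs s u hs hsu
    rw [abs_sub_comm]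
    have := abs_sub_abs_le_abs_sub (∫ x in s..u, h x) (2 * η * (u - s))
    rcases abs_cases ((∫ x in s..u, h x) - 2 * η * (u - s)) with ⟨he, _⟩ | ⟨he, _⟩ <;>
      rcases abs_cases (∫ x in s..u, h x) with ⟨h3, _⟩ | ⟨h3, _⟩ <;> nlinarith [hη]
  have hΛdiff : ∀ s u : ℝ, 0 ≤ s → s ≤ u → |Λ u - Λ s| ≤ V u - V s := by
    intro s u hs hsu
    rw [hΛsub s u hs hsu, hVsub s u hs hsu]
    have h1 : |∫ x in s..u, Λ' x| ≤ ∫ x in s..u, |Λ' x| :=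
      intervalIntegral.abs_integral_le_integral_abs hsu
    have h2 := hgabsΛ s u hs hsu
    nlinarith [hη]
  -- continuity
  have hicc : Set.uIcc (0:ℝ) T = Set.Icc 0 T := Set.uIcc_of_le hT
  have hΛcont : ContinuousOn Λ (Set.Icc 0 T) := by
    have hc : ContinuousOn (fun x => Λ 0 + ∫ s in (0:ℝ)..x, Λ' s) (Set.Icc 0 T) := by
      refine continuousOn_const.add ?_
      have := intervalIntegral.continuousOn_primitive_interval'
        (hΛ'int T hT) (Set.left_mem_uIcc (a := (0:ℝ)) (b := T))
      rwa [hicc] at this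
    exact hc.congr (fun x hx => hΛFTC x hx.1)
  have hBcont : ContinuousOn B (Set.Icc 0 T) := by
    have := intervalIntegral.continuousOn_primitive_interval'
      (ihh 0 T le_rfl hT) (Set.left_mem_uIcc (a := (0:ℝ)) (b := T))
    rw [hicc] at this
    exact ((continuous_const.mul continuous_id).continuousOn).sub this
  have hVcont : ContinuousOn V (Set.Icc 0 T) := by
    have := intervalIntegral.continuousOn_primitive_interval'
      (ig 0 T le_rfl hT) (Set.left_mem_uIcc (a := (0:ℝ)) (b := T))
    rw [hicc] at this
    exact ((continuous_const.mul continuous_id).continuousOn).add this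
  have hEcont : ContinuousOn E (Set.Icc 0 T) :=
    Real.continuous_exp.comp_continuousOn hBcont
  have iE : ∀ s u : ℝ, 0 ≤ s → s ≤ u → u ≤ T → IntervalIntegrable E volume s u := by
    intro s u hs hsu huT
    refine ContinuousOn.intervalIntegrable (hEcont.mono ?_)
    rw [Set.uIcc_of_le hsu]
    exact Set.Icc_subset_Icc hs huT
  -- constants
  set Q : ℝ := Real.exp (V T) with hQ_def
  set MΛ : ℝ := Λ 0 + V T with hMΛ_def
  have hVT : 0 ≤ V T := by have := hVmono 0 T le_rfl hT; rw [hV0] at this; exact this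
  have hQpos : 0 < Q := Real.exp_pos _
  have hQ1 : 1 ≤ Q := Real.one_le_exp hVT
  have hMΛ0 : 0 ≤ MΛ := add_nonneg (hΛnonneg 0 le_rfl) hVT
  have hEpos : ∀ x : ℝ, 0 < E x := fun x => Real.exp_pos _
  have hEleQ : ∀ x : ℝ, 0 ≤ x → x ≤ T → E x ≤ Q := by
    intro x hx hxT
    refine Real.exp_le_exp.mpr ?_
    have := hBdiff 0 x le_rfl hx
    rw [hB0, hV0] at this
    have h2 := hVmono x T hx hxT
    have := abs_le.mp this
    linarith [this.2]
  have hΛleM : ∀ x : ℝ, 0 ≤ x → x ≤ T → Λ x ≤ MΛ := by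
    intro x hx hxT
    have := hΛdiff 0 x le_rfl hx
    rw [hV0] at this
    have h2 := hVmono x T hx hxT
    have := abs_le.mp this
    rw [hMΛ_def]
    linarith [this.2]
  set C : ℝ := Q + 2 * MΛ * Q ^ 2 + k * Q ^ 2 / (2 * η) + 1 with hC_def
  have hCpos : 0 < C := by positivity
  -- key one-step estimate
  have key : ∀ s u : ℝ, 0 ≤ s → s ≤ u → u ≤ T →
      Λ u * E u - Λ s * E s ≤ k * (∫ x in s..u, E x) + C * (V u - V s) ^ 2 := by
    intro s u hs hsu huT
    have h0u : (0:ℝ) ≤ u := hs.trans hsu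
    have hsT : s ≤ T := hsu.trans huT
    set w : ℝ := V u - V s with hw_def
    set J : ℝ := B u - B s with hJ_def
    have hw0 : 0 ≤ w := sub_nonneg.mpr (hVmono s u hs hsu)
    have hwT : w ≤ V T := by
      have h1 := hVmono 0 s le_rfl hs
      have h2 := hVmono u T h0u huT
      rw [hV0] at h1
      rw [hw_def]; linarith
    have hJw : |J| ≤ w := hBdiff s u hs hsu
    have heJQ : Real.exp |J| ≤ Q := Real.exp_le_exp.mpr (hJw.trans hwT)
    have hcΛ : ContinuousOn Λ (Set.uIcc s u) := by
      refine hΛcont.mono ?_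
      rw [Set.uIcc_of_le hsu]
      exact Set.Icc_subset_Icc hs huT
    have ih' := ihh s u hs hsu
    have iΛ'' := iΛ' s u hs hsu
    have i1 : IntervalIntegrable (fun x => (h x - 2 * η) * Λ x + k) volume s u :=
      ((ih'.sub intervalIntegrable_const).mul_continuousOn hcΛ).add intervalIntegrable_const
    have hae : ∀ᵐ x ∂(volume.restrict (Set.Icc s u)), Λ' x ≤ (h x - 2 * η) * Λ x + k := by
      have hsub : Set.Icc s u ⊆ Set.Ici (0:ℝ) := fun x hx => hs.trans hx.1
      filter_upwards [ae_restrict_of_ae_restrict_of_subset hsub hineq] with x hx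
      nlinarith [hx]
    have h1a : (∫ x in s..u, Λ' x) ≤ ∫ x in s..u, ((h x - 2 * η) * Λ x + k) :=
      intervalIntegral.integral_mono_ae_restrict hsu iΛ'' i1 hae
    have i2 : IntervalIntegrable (fun x => (h x - 2 * η) * Λ x) volume s u :=
      (ih'.sub intervalIntegrable_const).mul_continuousOn hcΛ
    have h1b : (∫ x in s..u, ((h x - 2 * η) * Λ x + k)) =
        (∫ x in s..u, (h x - 2 * η) * Λ x) + (u - s) * k := by
      rw [intervalIntegral.integral_add i2 intervalIntegrable_const,
        intervalIntegral.integral_const, smul_eq_mul]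
    have ihs : IntervalIntegrable (fun x => h x - 2 * η) volume s u :=
      ih'.sub intervalIntegrable_const
    have i3 : IntervalIntegrable (fun x => (h x - 2 * η) * (Λ x - Λ s)) volume s u :=
      ihs.mul_continuousOn (hcΛ.sub continuousOn_const)
    have h1c : (∫ x in s..u, (h x - 2 * η) * Λ x) =
        (∫ x in s..u, (h x - 2 * η)) * Λ s
          + ∫ x in s..u, (h x - 2 * η) * (Λ x - Λ s) := by
      have e1 : (∫ x in s..u, (h x - 2 * η) * Λ x) =
          ∫ x in s..u, ((h x - 2 * η) * Λ s + (h x - 2 * η) * (Λ x - Λ s)) :=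
        intervalIntegral.integral_congr (fun x _ => by ring)
      rw [e1, intervalIntegral.integral_add (ihs.mul_const _) i3,
        intervalIntegral.integral_mul_const]
    have h1d : (∫ x in s..u, (h x - 2 * η)) = -J := by
      rw [intervalIntegral.integral_sub ih' intervalIntegrable_const,
        intervalIntegral.integral_const, smul_eq_mul, hJ_def, hBsub s u hs hsu]
      ring
    have hgw : (∫ x in s..u, (|h x| + 2 * η)) ≤ w := by
      rw [intervalIntegral.integral_add ih'.abs intervalIntegrable_const,
        intervalIntegral.integral_const, smul_eq_mul]
      have h2 := hgabs s u hs hsu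
      rw [hw_def, hVsub s u hs hsu]
      linarith
    have h1e : (∫ x in s..u, (h x - 2 * η) * (Λ x - Λ s)) ≤ w * w := by
      have hpt : ∀ x ∈ Set.Icc s u, (h x - 2 * η) * (Λ x - Λ s) ≤ (|h x| + 2 * η) * w := by
        intro x hx
        have hΛx : |Λ x - Λ s| ≤ w := by
          have hd := hΛdiff s x hs hx.1
          have h2 := hVmono x u (hs.trans hx.1) hx.2
          rw [hw_def]; linarith
        have habs : |h x - 2 * η| ≤ |h x| + 2 * η := by
          rw [sub_eq_add_neg]
          refine (abs_add_le _ _).trans ?_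
          rw [abs_neg, abs_of_pos (by positivity : (0:ℝ) < 2 * η)]
        calc (h x - 2 * η) * (Λ x - Λ s) ≤ |(h x - 2 * η) * (Λ x - Λ s)| := le_abs_self _
          _ = |h x - 2 * η| * |Λ x - Λ s| := abs_mul _ _
          _ ≤ (|h x| + 2 * η) * w :=
            mul_le_mul habs hΛx (abs_nonneg _) (by positivity)
      have i4 : IntervalIntegrable (fun x => (|h x| + 2 * η) * w) volume s u :=
        (ih'.abs.add intervalIntegrable_const).mul_const _
      have hm1 := intervalIntegral.integral_mono_on hsu i3 i4 hpt
      rw [intervalIntegral.integral_mul_const] at hm1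
      have hm3 := mul_le_mul_of_nonneg_right hgw hw0
      linarith
    have h1 : Λ u - Λ s ≤ Λ s * (-J) + w ^ 2 + k * (u - s) := by
      rw [hΛsub s u hs hsu]
      calc (∫ x in s..u, Λ' x) ≤ ∫ x in s..u, ((h x - 2 * η) * Λ x + k) := h1a
        _ = (∫ x in s..u, (h x - 2 * η) * Λ x) + (u - s) * k := h1b
        _ = (-J) * Λ s + (∫ x in s..u, (h x - 2 * η) * (Λ x - Λ s)) + (u - s) * k := by
            rw [h1c, h1d]
        _ ≤ (-J) * Λ s + w * w + (u - s) * k := by linarith [h1e]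
        _ = Λ s * (-J) + w ^ 2 + k * (u - s) := by ring
    have hEu : E u = E s * Real.exp J := by
      simp only [hE_def]
      rw [hJ_def, ← Real.exp_add]
      congr 1; ring
    have hEsQ : E s ≤ Q := hEleQ s hs hsT
    have hEuQ : E u ≤ Q := hEleQ u h0u huT
    have hΛsM : Λ s ≤ MΛ := hΛleM s hs hsT
    have hΛs0 : 0 ≤ Λ s := hΛnonneg s hs
    have hEs0 : 0 ≤ E s := (hEpos s).le
    have hexpJ : Real.exp J - 1 ≤ J + w ^ 2 * Q := by
      have ha := aux_exp2 J
      have hb : J ^ 2 * Real.exp |J| ≤ w ^ 2 * Q := by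
        refine mul_le_mul ?_ heJQ (Real.exp_pos _).le (by positivity)
        rw [← sq_abs J, ← sq_abs w]
        exact pow_le_pow_left₀ (abs_nonneg _) (hJw.trans (le_abs_self w)) 2
      have hc := (le_abs_self (Real.exp J - 1 - J)).trans ha
      linarith
    have h2 : Λ s * (E u - E s) ≤ Λ s * E s * J + MΛ * Q ^ 2 * w ^ 2 := by
      have hrw : E u - E s = E s * (Real.exp J - 1) := by rw [hEu]; ring
      rw [hrw]
      have step : E s * (Real.exp J - 1) ≤ E s * J + E s * (w ^ 2 * Q) := by
        nlinarith [hexpJ, hEs0]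
      have step2 : Λ s * (E s * (Real.exp J - 1)) ≤ Λ s * (E s * J + E s * (w ^ 2 * Q)) :=
        mul_le_mul_of_nonneg_left step hΛs0
      have step3 : Λ s * (E s * (w ^ 2 * Q)) ≤ MΛ * Q ^ 2 * w ^ 2 := by
        have hmm : Λ s * E s ≤ MΛ * Q := mul_le_mul hΛsM hEsQ hEs0 hMΛ0
        have hmm2 := mul_le_mul_of_nonneg_right hmm
          (show (0:ℝ) ≤ w ^ 2 * Q by positivity)
        calc Λ s * (E s * (w ^ 2 * Q)) = Λ s * E s * (w ^ 2 * Q) := by ring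
          _ ≤ MΛ * Q * (w ^ 2 * Q) := hmm2
          _ = MΛ * Q ^ 2 * w ^ 2 := by ring
      linarith [step2, step3]
    have hEdiff : |E u - E s| ≤ Q * (w * Q) := by
      have hrw : E u - E s = E s * (Real.exp J - 1) := by rw [hEu]; ring
      rw [hrw, abs_mul, abs_of_pos (hEpos s)]
      have hb : |J| * Real.exp |J| ≤ w * Q :=
        mul_le_mul hJw heJQ (Real.exp_pos _).le hw0
      exact mul_le_mul hEsQ ((aux_exp1 J).trans hb) (abs_nonneg _) hQpos.le
    have h3 : E u * (Λ s * (-J)) + Λ s * E s * J ≤ MΛ * Q ^ 2 * w ^ 2 := by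
      have hrw : E u * (Λ s * (-J)) + Λ s * E s * J = Λ s * J * (E s - E u) := by ring
      rw [hrw]
      calc Λ s * J * (E s - E u) ≤ |Λ s * J * (E s - E u)| := le_abs_self _
        _ = Λ s * |J| * |E s - E u| := by
            rw [abs_mul, abs_mul, abs_of_nonneg hΛs0]
        _ ≤ MΛ * w * (Q * (w * Q)) := by
            rw [abs_sub_comm (E s) (E u)]
            exact mul_le_mul (mul_le_mul hΛsM hJw (abs_nonneg _) hMΛ0) hEdiff
              (abs_nonneg _) (mul_nonneg hMΛ0 hw0)
        _ = MΛ * Q ^ 2 * w ^ 2 := by ring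
    have h4 : E u * (k * (u - s)) ≤ k * (∫ x in s..u, E x) + k * Q ^ 2 / (2 * η) * w ^ 2 := by
      have hptE : ∀ x ∈ Set.Icc s u, E u ≤ E x + Q * (w * Q) := by
        intro x hx
        have h0x : (0:ℝ) ≤ x := hs.trans hx.1
        have hBx : |B u - B x| ≤ w := by
          have hd := hBdiff x u h0x hx.2
          have h2 := hVmono s x hs hx.1
          rw [hw_def]; linarith
        have heQ : Real.exp |B u - B x| ≤ Q := Real.exp_le_exp.mpr (hBx.trans hwT)
        have hrw : E u - E x = E x * (Real.exp (B u - B x) - 1) := by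
          simp only [hE_def]
          rw [mul_sub, mul_one, ← Real.exp_add]
          have e2 : B x + (B u - B x) = B u := by ring
          rw [e2]
        have hEx : E u - E x ≤ Q * (w * Q) := by
          calc E u - E x ≤ |E u - E x| := le_abs_self _
            _ = E x * |Real.exp (B u - B x) - 1| := by
                rw [hrw, abs_mul, abs_of_pos (hEpos x)]
            _ ≤ Q * (w * Q) := mul_le_mul (hEleQ x h0x (hx.2.trans huT))
                ((aux_exp1 _).trans (mul_le_mul hBx heQ (Real.exp_pos _).le hw0))
                (abs_nonneg _) hQpos.le
        linarith
      have hconst : E u * (u - s) ≤ (∫ x in s..u, E x) + (u - s) * (Q * (w * Q)) := by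
        have hint2 : IntervalIntegrable (fun x => E x + Q * (w * Q)) volume s u :=
          (iE s u hs hsu huT).add intervalIntegrable_const
        have hm2 := intervalIntegral.integral_mono_on hsu
          (intervalIntegrable_const (c := E u)) hint2 hptE
        rw [intervalIntegral.integral_const, smul_eq_mul,
          intervalIntegral.integral_add (iE s u hs hsu huT) intervalIntegrable_const,
          intervalIntegral.integral_const, smul_eq_mul] at hm2
        linarith
      have hus : u - s ≤ w / (2 * η) := by
        have he := hVsub s u hs hsu
        have h2 : (0:ℝ) ≤ ∫ x in s..u, g x :=
          intervalIntegral.integral_nonneg hsu (fun x _ => by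
            simp only [hg_def]; positivity)
        rw [hw_def, he, le_div_iff₀ (by positivity : (0:ℝ) < 2 * η)]
        nlinarith
      have husw : (u - s) * (Q * (w * Q)) ≤ Q ^ 2 / (2 * η) * w ^ 2 := by
        have hb1 : (u - s) * w ≤ w / (2 * η) * w := mul_le_mul_of_nonneg_right hus hw0
        calc (u - s) * (Q * (w * Q)) = ((u - s) * w) * Q ^ 2 := by ring
          _ ≤ (w / (2 * η) * w) * Q ^ 2 :=
            mul_le_mul_of_nonneg_right hb1 (by positivity)
          _ = Q ^ 2 / (2 * η) * w ^ 2 := by ring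
      calc E u * (k * (u - s)) = k * (E u * (u - s)) := by ring
        _ ≤ k * ((∫ x in s..u, E x) + (u - s) * (Q * (w * Q))) :=
            mul_le_mul_of_nonneg_left hconst hk
        _ ≤ k * ((∫ x in s..u, E x) + Q ^ 2 / (2 * η) * w ^ 2) :=
            mul_le_mul_of_nonneg_left (add_le_add le_rfl husw) hk
        _ = k * (∫ x in s..u, E x) + k * Q ^ 2 / (2 * η) * w ^ 2 := by ring
    have hstep : E u * (Λ u - Λ s) ≤ E u * (Λ s * (-J) + w ^ 2 + k * (u - s)) :=
      mul_le_mul_of_nonneg_left h1 (hEpos u).le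
    have hEuw : E u * w ^ 2 ≤ Q * w ^ 2 :=
      mul_le_mul_of_nonneg_right hEuQ (by positivity)
    calc Λ u * E u - Λ s * E s = E u * (Λ u - Λ s) + Λ s * (E u - E s) := by ring
      _ ≤ E u * (Λ s * (-J) + w ^ 2 + k * (u - s))
            + (Λ s * E s * J + MΛ * Q ^ 2 * w ^ 2) := add_le_add hstep h2
      _ = (E u * (Λ s * (-J)) + Λ s * E s * J) + E u * w ^ 2 + E u * (k * (u - s))
            + MΛ * Q ^ 2 * w ^ 2 := by ring
      _ ≤ MΛ * Q ^ 2 * w ^ 2 + Q * w ^ 2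
            + (k * (∫ x in s..u, E x) + k * Q ^ 2 / (2 * η) * w ^ 2)
            + MΛ * Q ^ 2 * w ^ 2 :=
          add_le_add (add_le_add (add_le_add h3 hEuw) h4) le_rfl
      _ ≤ k * (∫ x in s..u, E x) + C * w ^ 2 := by
          rw [hC_def]; nlinarith [sq_nonneg w]
  
  -- primitive of E
  set GE : ℝ → ℝ := fun x => ∫ y in (0:ℝ)..x, E y with hGE_def
  have hGEadd : ∀ i j : ℝ, 0 ≤ i → i ≤ j → j ≤ T → GE j - GE i = ∫ x in i..j, E x := by
    intro i j hi hij hjT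
    have hadd := intervalIntegral.integral_add_adjacent_intervals
      (iE 0 i le_rfl hi (hij.trans hjT)) (iE i j hi hij hjT)
    simp only [hGE_def]
    rw [← hadd]; ring
  -- main integral inequality by telescoping
  have hmain : Λ T * E T - Λ 0 * E 0 ≤ k * ∫ x in (0:ℝ)..T, E x := by
    have hGET : GE T = ∫ x in (0:ℝ)..T, E x := rfl
    rw [← hGET]
    have hforall : ∀ ε : ℝ, 0 < ε → Λ T * E T - Λ 0 * E 0 ≤ k * GE T + ε := by
      intro ε hε
      set δ : ℝ := ε / (C * (V T + 1)) with hδ_def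
      have hδpos : 0 < δ := div_pos hε (mul_pos hCpos (by linarith [hVT]))
      have hucV : UniformContinuousOn V (Set.Icc 0 T) :=
        isCompact_Icc.uniformContinuousOn_of_continuous hVcont
      rw [Metric.uniformContinuousOn_iff] at hucV
      obtain ⟨δ', hδ'pos, hδ'⟩ := hucV δ hδpos
      obtain ⟨n, hn⟩ := exists_nat_gt (T / δ' + 1)
      have hnpos : 0 < (n:ℝ) := by
        have hd0 : (0:ℝ) ≤ T / δ' := div_nonneg hT hδ'pos.le
        linarith
      set p : ℕ → ℝ := fun i => (i : ℝ) * T / n with hp_def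
      have hp0 : p 0 = 0 := by simp [hp_def]
      have hpn : p n = T := by
        simp only [hp_def]
        field_simp
      have hpmono : ∀ i : ℕ, p i ≤ p (i+1) := by
        intro i
        simp only [hp_def]
        push_cast
        have hle : (i:ℝ) * T ≤ ((i:ℝ)+1) * T := by nlinarith
        exact (div_le_div_iff_of_pos_right hnpos).mpr hle
      have hpmem : ∀ i : ℕ, i ≤ n → 0 ≤ p i ∧ p i ≤ T := by
        intro i hi
        have hi' : (i:ℝ) ≤ (n:ℝ) := Nat.cast_le.mpr hi
        constructor
        · simp only [hp_def]; positivity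
        · simp only [hp_def]
          rw [div_le_iff₀ hnpos]
          nlinarith
      have hgap : ∀ i : ℕ, p (i+1) - p i = T / n := by
        intro i
        simp only [hp_def]
        push_cast
        field_simp
        ring
      have hTn : T / n < δ' := by
        rw [div_lt_iff₀ hnpos]
        have h1 : T / δ' < (n:ℝ) := by linarith
        calc T = T / δ' * δ' := by field_simp
          _ < (n:ℝ) * δ' := mul_lt_mul_of_pos_right h1 hδ'pos
          _ = δ' * (n:ℝ) := by ring
      have hwsmall : ∀ i : ℕ, i < n → V (p (i+1)) - V (p i) ≤ δ := by
        intro i hi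
        have h1 := hpmem i hi.le
        have h2 := hpmem (i+1) (Nat.succ_le_of_lt hi)
        have hdist : dist (p (i+1)) (p i) < δ' := by
          rw [Real.dist_eq, hgap i, abs_of_nonneg (by positivity)]
          exact hTn
        have hd := hδ' (p (i+1)) (Set.mem_Icc.mpr h2) (p i) (Set.mem_Icc.mpr h1) hdist
        rw [Real.dist_eq] at hd
        have hle := (le_abs_self (V (p (i+1)) - V (p i))).trans hd.le
        exact hle
      have hstep : ∀ i ∈ Finset.range n,
          Λ (p (i+1)) * E (p (i+1)) - Λ (p i) * E (p i) ≤
            (k * GE (p (i+1)) + C * δ * V (p (i+1)))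
              - (k * GE (p i) + C * δ * V (p i)) := by
        intro i hi'
        have hi : i < n := Finset.mem_range.mp hi'
        have h1 := hpmem i hi.le
        have h2 := hpmem (i+1) (Nat.succ_le_of_lt hi)
        have hk1 := key (p i) (p (i+1)) h1.1 (hpmono i) h2.2
        have hge := hGEadd (p i) (p (i+1)) h1.1 (hpmono i) h2.2
        have hww := hwsmall i hi
        have hw0' : 0 ≤ V (p (i+1)) - V (p i) :=
          sub_nonneg.mpr (hVmono _ _ h1.1 (hpmono i))
        have hsq : (V (p (i+1)) - V (p i)) ^ 2 ≤ δ * (V (p (i+1)) - V (p i)) := by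
          nlinarith
        calc Λ (p (i+1)) * E (p (i+1)) - Λ (p i) * E (p i)
            ≤ k * (∫ x in (p i)..(p (i+1)), E x)
              + C * (V (p (i+1)) - V (p i)) ^ 2 := hk1
          _ ≤ k * (GE (p (i+1)) - GE (p i))
              + C * (δ * (V (p (i+1)) - V (p i))) := by
              rw [← hge]
              have hmul := mul_le_mul_of_nonneg_left hsq hCpos.le
              linarith
          _ = (k * GE (p (i+1)) + C * δ * V (p (i+1)))
              - (k * GE (p i) + C * δ * V (p i)) := by ring
      have hsumle := Finset.sum_le_sum hstep
      rw [Finset.sum_range_sub (fun i => Λ (p i) * E (p i)) n,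
        Finset.sum_range_sub (fun i => k * GE (p i) + C * δ * V (p i)) n,
        hp0, hpn] at hsumle
      have hGE0 : GE 0 = 0 := by simp [hGE_def]
      rw [hGE0, hV0] at hsumle
      have hδVT : C * δ * V T ≤ ε := by
        have hpos : 0 < C * (V T + 1) := mul_pos hCpos (by linarith [hVT])
        have he : C * δ * V T = ε * (C * V T) / (C * (V T + 1)) := by
          rw [hδ_def]; ring
        rw [he, div_le_iff₀ hpos]
        nlinarith [hε.le, hCpos.le, hVT]
      have : k * GE T + C * δ * V T - (k * 0 + C * δ * 0) = k * GE T + C * δ * V T := by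
        ring
      linarith [hsumle]
    by_contra hcon
    push_neg at hcon
    have := hforall ((Λ T * E T - Λ 0 * E 0 - k * GE T) / 2) (by linarith)
    linarith
  -- final computation
  have hET : 0 < E T := hEpos T
  have hE0 : E 0 = 1 := by
    simp only [hE_def]
    rw [hB0, Real.exp_zero]
  rw [hE0, mul_one] at hmain
  have hint : (∫ x in (0:ℝ)..T, E x) ≤ Real.exp (B T + m) * (1 / η) := by
    have hpt : ∀ x ∈ Set.Icc (0:ℝ) T,
        E x ≤ Real.exp (B T + m) * Real.exp (η * x - η * T) := by
      intro x hx
      have hb := hhbound x T hx.1 hx.2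
      have hBTx : B T - B x = 2 * η * (T - x) - ∫ τ in x..T, h τ := hBsub x T hx.1 hx.2
      have hBle : B x ≤ (B T + m) + (η * x - η * T) := by linarith
      calc E x = Real.exp (B x) := rfl
        _ ≤ Real.exp ((B T + m) + (η * x - η * T)) := Real.exp_le_exp.mpr hBle
        _ = Real.exp (B T + m) * Real.exp (η * x - η * T) := Real.exp_add _ _
    have hexpint : (∫ x in (0:ℝ)..T, Real.exp (η * x - η * T))
        = (1 - Real.exp (-η * T)) / η := by
      have hd : ∀ x ∈ Set.uIcc (0:ℝ) T,
          HasDerivAt (fun y => Real.exp (η * y - η * T) / η)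
            (Real.exp (η * x - η * T)) x := by
        intro x _
        have h1 : HasDerivAt (fun y : ℝ => η * y - η * T) η x := by
          simpa using ((hasDerivAt_id x).const_mul η).sub_const (η * T)
        have h2 := (Real.hasDerivAt_exp (η * x - η * T)).comp x h1
        have h3 := h2.div_const η
        rwa [mul_div_cancel_right₀ _ hη.ne'] at h3
      have hci : IntervalIntegrable (fun x => Real.exp (η * x - η * T)) volume 0 T :=
        (Real.continuous_exp.comp
          ((continuous_const.mul continuous_id).sub continuous_const)).intervalIntegrable 0 T
      have hftc := intervalIntegral.integral_eq_sub_of_hasDerivAt hd hci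
      rw [hftc]
      show Real.exp (η * T - η * T) / η - Real.exp (η * 0 - η * T) / η = _
      rw [show η * T - η * T = (0:ℝ) by ring, show η * 0 - η * T = -η * T by ring,
        Real.exp_zero]
      ring
    have hci2 : IntervalIntegrable
        (fun x => Real.exp (B T + m) * Real.exp (η * x - η * T)) volume 0 T :=
      (continuous_const.mul (Real.continuous_exp.comp
        ((continuous_const.mul continuous_id).sub continuous_const))).intervalIntegrable 0 T
    have hmono := intervalIntegral.integral_mono_on hT (iE 0 T le_rfl hT le_rfl) hci2 hpt
    rw [intervalIntegral.integral_const_mul, hexpint] at hmono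
    have hfrac : (1 - Real.exp (-η * T)) / η ≤ 1 / η := by
      have he := Real.exp_pos (-η * T)
      gcongr
      linarith
    calc (∫ x in (0:ℝ)..T, E x) ≤ Real.exp (B T + m) * ((1 - Real.exp (-η * T)) / η) := hmono
      _ ≤ Real.exp (B T + m) * (1 / η) :=
        mul_le_mul_of_nonneg_left hfrac (Real.exp_pos _).le
  have hfin : Λ T ≤ (Λ 0 + k * (Real.exp (B T + m) * (1 / η))) / E T := by
    rw [le_div_iff₀ hET]
    have hki := mul_le_mul_of_nonneg_left hint hk
    linarith
  have hBT : -(B T) ≤ m - η * T := by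
    have hb := hhbound 0 T le_rfl hT
    have he := hBsub 0 T le_rfl hT
    rw [hB0] at he
    have he2 : B T = 2 * η * (T - 0) - ∫ τ in (0:ℝ)..T, h τ := by linarith
    linarith
  have hsplit : (Λ 0 + k * (Real.exp (B T + m) * (1 / η))) / E T
      = Λ 0 * Real.exp (-(B T)) + k * Real.exp m / η := by
    simp only [hE_def]
    rw [Real.exp_neg, Real.exp_add]
    field_simp
  rw [hsplit] at hfin
  have hlast : Λ 0 * Real.exp (-(B T)) ≤ Λ 0 * (Real.exp m * Real.exp (-η * T)) := by
    refine mul_le_mul_of_nonneg_left ?_ (hΛnonneg 0 le_rfl)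
    rw [← Real.exp_add]
    exact Real.exp_le_exp.mpr (by linarith)
  calc Λ T ≤ Λ 0 * Real.exp (-(B T)) + k * Real.exp m / η := hfin
    _ ≤ Λ 0 * Real.exp m * Real.exp (-η * T) + k * Real.exp m / η := by
        rw [mul_assoc]
        linarith
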